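/- If f ∈ ℤ[x] is a monic irreducible polynomial of degree 4 that has a real root and whose four roots all have equal modulus, then f(x) = f(−x), i.e., f is of the form x⁴ + ax² + b. -/

import Mathlib

open Polynomial

theorem stmt11 (f : Polynomial ℤ) (hm : f.Monic) (hirr : Irreducible f)
    (hdeg : f.natDegree = 4)
    (heqmod : ∀ z ∈ (f.map (Int.castRingHom ℂ)).roots,
      ∀ w ∈ (f.map (Int.castRingHom ℂ)).roots, ‖z‖ = ‖w‖)
    (hrealroot : ∃ α : ℝ, aeval α f = 0) :
    f.comp (-X) = f ∧ ∃ a b : ℤ, f = X ^ 4 + C a * X ^ 2 + C b := by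
  obtain ⟨α, hα⟩ := hrealroot
  set F := f.map (Int.castRingHom ℂ) with hF
  have hFm : F.Monic := hm.map _
  have hFne : F ≠ 0 := hFm.ne_zero
  have hFdeg : F.natDegree = 4 := by rw [hF, hm.natDegree_map, hdeg]
  have hαC : (↑α : ℂ) ∈ F.roots := by
    rw [mem_roots hFne]
    have : (aeval (↑α : ℂ) f) = 0 := by
      have := congrArg (algebraMap ℝ ℂ) hα
      rwa [map_zero, ← aeval_algebraMap_apply] at this
    rwa [aeval_def, eval₂_eq_eval_map] at this
  have habs : ∀ z ∈ F.roots, ‖z‖ = |α| := by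
    intro z hz
    have := heqmod z hz _ hαC
    simpa using this
  have hcard : Multiset.card F.roots = 4 := by
    rw [← hFdeg]
    exact (splits_iff_card_roots.mp (IsAlgClosed.splits _))
  have hprodform : F = (F.roots.map fun a => X - C a).prod :=
    (IsAlgClosed.splits _).eq_prod_roots_of_monic hFm
  have heval0 : F.eval 0 = (F.roots.map fun a => -a).prod := by
    conv_lhs => rw [hprodform]
    rw [eval_multiset_prod, Multiset.map_map]
    congr 1
    simp
  have habs0 : ‖F.eval 0‖ = |α| ^ 4 := by
    rw [heval0, show ‖(Multiset.map (fun a => -a) F.roots).prod‖ = (normHom : ℂ →*₀ ℝ) (Multiset.map (fun a => -a) F.roots).prod from rfl, map_multiset_prod, Multiset.map_map]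
    have : Multiset.map (⇑(normHom : ℂ →*₀ ℝ) ∘ fun a => -a) F.roots
        = Multiset.replicate 4 |α| := by
      rw [Multiset.eq_replicate]
      refine ⟨by simp [hcard], ?_⟩
      intro b hb
      obtain ⟨z, hz, rfl⟩ := Multiset.mem_map.mp hb
      simp [habs z hz]
    rw [this, Multiset.prod_replicate]
  -- f.coeff 0 relates
  have hev : F.eval 0 = ((f.coeff 0 : ℤ) : ℂ) := by
    rw [hF, eval_map]
    simp [eval₂_at_zero]
  have hint : ((|f.coeff 0| : ℤ) : ℝ) = α ^ 4 := by
    have h1 : ‖((f.coeff 0 : ℤ) : ℂ)‖ = |(f.coeff 0 : ℝ)| := by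
      exact Complex.norm_intCast _
    rw [Int.cast_abs, ← h1, ← hev, habs0]
    rw [pow_abs, abs_of_nonneg (by positivity)]
  -- define g = X^4 - C n and show f = g
  set n : ℤ := |f.coeff 0| with hn
  set g : Polynomial ℤ := X ^ 4 - C n with hg
  have hgm : g.Monic := by
    have := monic_X_pow_sub_C (R := ℤ) n (n := 4) (by norm_num)
    simpa [hg] using this
  have hgdeg : g.natDegree = 4 := by
    rw [hg]
    compute_degree!
  have hgroot : aeval α g = 0 := by
    rw [hg]
    simp [hint]
  -- pass to ℚ
  have hfQirr : Irreducible (f.map (algebraMap ℤ ℚ)) :=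
    (hm.irreducible_iff_irreducible_map_fraction_map).mp hirr
  have hfQroot : aeval α (f.map (algebraMap ℤ ℚ)) = 0 := by
    rw [aeval_map_algebraMap]; exact hα
  have hmin : minpoly ℚ α = f.map (algebraMap ℤ ℚ) :=
    (minpoly.eq_of_irreducible_of_monic hfQirr hfQroot (hm.map _)).symm
  have hdvd : f.map (algebraMap ℤ ℚ) ∣ g.map (algebraMap ℤ ℚ) := by
    rw [← hmin]
    exact minpoly.dvd ℚ α (by rw [aeval_map_algebraMap]; exact hgroot)
  have hfg : g.map (algebraMap ℤ ℚ) = f.map (algebraMap ℤ ℚ) := by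
    refine eq_of_monic_of_dvd_of_natDegree_le (hm.map _) (hgm.map _) hdvd ?_
    rw [hgm.natDegree_map, hm.natDegree_map, hdeg, hgdeg]
  have hfeq : f = g := by
    have hinj : Function.Injective (algebraMap ℤ ℚ) := fun a b h => by
      exact_mod_cast h
    exact (Polynomial.map_injective _ hinj) hfg.symm
  constructor
  · rw [hfeq, hg]
    simp [sub_comp, pow_comp, X_comp, C_comp]
    ring
  · exact ⟨0, -n, by rw [hfeq, hg]; simp; ring⟩
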